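/- Let λ be an ω-inaccessible cardinal, let ℱ be a pairwise almost disjoint family of subsets of λ, each of order type ω, such that every infinite subset of λ has infinite intersection with some member of ℱ, and let H : [λ]^ω → λ be a map such that for every F ∈ ℱ and every infinite a ⊆ F the image H[[a]^ω] equals F, and H(S) = 0 whenever S ∈ [λ]^ω is contained in no member of ℱ. Then the family 𝒜 of all H-closed subsets of λ of cardinality less than λ is good over λ. -/

import Mathlib

open Cardinal Set

/-- `C` is `H`-closed: `H S ∈ C` for every countably infinite `S ⊆ C`. -/
def HClosed (H : Set Ordinal → Ordinal) (C : Set Ordinal) : Prop :=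
  ∀ S : Set Ordinal, S ⊆ C → S.Countable → S.Infinite → H S ∈ C

/-- A set of ordinals has order type `ω` iff it is countably infinite and each of its
proper initial segments is finite. -/
def HasOrderTypeOmega (F : Set Ordinal) : Prop :=
  F.Countable ∧ F.Infinite ∧ ∀ ξ ∈ F, (F ∩ Set.Iio ξ).Finite

/-- A family `𝒜` of proper subsets of `λ` (identified with the set `Set.Iio lam.ord` of
ordinals below `λ`) is *good* over `λ`. -/
def IsGoodFamily (lam : Cardinal.{0}) (𝒜 : Set (Set Ordinal)) : Prop :=
  (∀ A ∈ 𝒜, A ⊂ Set.Iio lam.ord) ∧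
  (∀ α : Ordinal, α < lam.ord → Set.Iio α ∈ 𝒜) ∧
  (∀ S : Set Ordinal, S ⊆ Set.Iio lam.ord → Cardinal.mk S < Cardinal.lift.{1} lam →
      ∃ A ∈ 𝒜, S ⊆ A) ∧
  (∀ S : Set Ordinal, S ⊆ Set.Iio lam.ord → Cardinal.mk S = Cardinal.aleph 1 →
      ∃ T : Set Ordinal, T ⊆ S ∧ Cardinal.mk T = Cardinal.aleph 1 ∧
        ∀ A ∈ 𝒜, Cardinal.mk ↥(A ∩ T) ≤ ℵ₀ ∨ T ⊆ A)

/-- Transfinite iteration of the operation "add every `F ∈ ℱ` meeting the current set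
in an infinite set", starting from `S0`. -/
noncomputable def stage (ℱ : Set (Set Ordinal)) (S0 : Set Ordinal) : Ordinal → Set Ordinal :=
  Ordinal.lt_wf.fix fun o ih =>
    S0 ∪ ⋃ p : ↥(Set.Iio o), ⋃₀ {F | F ∈ ℱ ∧ (F ∩ ih p.1 p.2).Infinite}

theorem stage_eq (ℱ : Set (Set Ordinal)) (S0 : Set Ordinal) (o : Ordinal) :
    stage ℱ S0 o =
      S0 ∪ ⋃ p : ↥(Set.Iio o), ⋃₀ {F | F ∈ ℱ ∧ (F ∩ stage ℱ S0 p.1).Infinite} :=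
  WellFounded.fix_eq _ _ o

theorem subset_stage (ℱ : Set (Set Ordinal)) (S0 : Set Ordinal) (o : Ordinal) :
    S0 ⊆ stage ℱ S0 o := by
  rw [stage_eq]; exact subset_union_left

theorem stage_mono (ℱ : Set (Set Ordinal)) (S0 : Set Ordinal) {o₁ o₂ : Ordinal}
    (h : o₁ ≤ o₂) : stage ℱ S0 o₁ ⊆ stage ℱ S0 o₂ := by
  rw [stage_eq ℱ S0 o₁, stage_eq ℱ S0 o₂]
  apply union_subset_union subset_rfl
  intro x hx
  rw [mem_iUnion] at hx ⊢
  obtain ⟨p, hp⟩ := hx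
  exact ⟨⟨p.1, lt_of_lt_of_le p.2 h⟩, hp⟩

theorem F_subset_stage (ℱ : Set (Set Ordinal)) (S0 : Set Ordinal) {F : Set Ordinal}
    {o' o : Ordinal} (hFm : F ∈ ℱ) (hinf : (F ∩ stage ℱ S0 o').Infinite) (ho : o' < o) :
    F ⊆ stage ℱ S0 o := by
  rw [stage_eq ℱ S0 o]
  intro x hx
  refine Or.inr ?_
  rw [mem_iUnion]
  exact ⟨⟨o', ho⟩, F, ⟨hFm, hinf⟩, hx⟩

theorem stage_subset (ℱ : Set (Set Ordinal)) {S0 V : Set Ordinal}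
    (hS0 : S0 ⊆ V) (hℱ : ∀ F ∈ ℱ, F ⊆ V) (o : Ordinal) : stage ℱ S0 o ⊆ V := by
  rw [stage_eq]
  refine union_subset hS0 (iUnion_subset fun p => sUnion_subset fun F hF => hℱ F hF.1)

theorem mem_stage_elim (ℱ : Set (Set Ordinal)) (S0 : Set Ordinal) {o : Ordinal}
    {x : Ordinal} (hx : x ∈ stage ℱ S0 o) :
    x ∈ S0 ∨ ∃ o' < o, ∃ F ∈ ℱ, (F ∩ stage ℱ S0 o').Infinite ∧ x ∈ F := by
  rw [stage_eq] at hx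
  rcases hx with h | h
  · exact Or.inl h
  · rw [mem_iUnion] at h
    obtain ⟨p, hp⟩ := h
    rw [mem_sUnion] at hp
    obtain ⟨F, ⟨hFm, hFi⟩, hxF⟩ := hp
    exact Or.inr ⟨p.1, p.2, F, hFm, hFi, hxF⟩

theorem stage_card (ℱ : Set (Set Ordinal)) (S0 : Set Ordinal) (c : Cardinal.{1})
    (hℱc : ∀ F ∈ ℱ, F.Countable)
    (hAD : ∀ F ∈ ℱ, ∀ F' ∈ ℱ, F ≠ F' → (F ∩ F').Finite)
    (hS0 : Cardinal.mk ↥S0 ≤ c)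
    (hom : Cardinal.lift.{1} (Cardinal.aleph (1 : Ordinal.{0})) ≤ c)
    (hpow : c ^ ℵ₀ = c) :
    ∀ o : Ordinal, o ≤ (Cardinal.aleph (1 : Ordinal.{0})).ord → Cardinal.mk ↥(stage ℱ S0 o) ≤ c := by
  have hale : ℵ₀ ≤ c := by
    refine le_trans ?_ hom
    rw [← Cardinal.lift_aleph0.{1,0}]
    exact Cardinal.lift_le.mpr (aleph0_le_aleph 1)
  intro o
  induction o using Ordinal.induction with
  | h o ih =>
    intro ho
    rw [stage_eq]
    have hU : ∀ p : ↥(Set.Iio o),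
        Cardinal.mk ↥(⋃₀ {F | F ∈ ℱ ∧ (F ∩ stage ℱ S0 p.1).Infinite}) ≤ c := by
      intro p
      have hstp : Cardinal.mk ↥(stage ℱ S0 p.1) ≤ c :=
        ih p.1 p.2 (le_of_lt (lt_of_lt_of_le p.2 ho))
      set G := {F | F ∈ ℱ ∧ (F ∩ stage ℱ S0 p.1).Infinite} with hG
      have hGle : Cardinal.mk ↥G ≤ c := by
        have hinj : Function.Injective
            (fun F : ↥G => (⟨F.1 ∩ stage ℱ S0 p.1, inter_subset_right,
              Cardinal.mk_le_aleph0_iff.2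
                (((hℱc F.1 F.2.1).mono inter_subset_left).to_subtype)⟩ :
              {t : Set Ordinal // t ⊆ stage ℱ S0 p.1 ∧ Cardinal.mk ↥t ≤ ℵ₀})) := by
          rintro ⟨F, hFm, hFi⟩ ⟨F', hFm', hFi'⟩ h
          simp only [Subtype.mk.injEq] at h
          refine Subtype.ext ?_
          by_contra hne
          have hfin := hAD F hFm F' hFm' (by simpa using hne)
          refine hFi (Set.Finite.subset hfin ?_)
          intro x hx
          exact ⟨hx.1, (h ▸ hx).1⟩
        calc Cardinal.mk ↥G
            ≤ Cardinal.mk {t : Set Ordinal // t ⊆ stage ℱ S0 p.1 ∧ Cardinal.mk ↥t ≤ ℵ₀} :=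
              Cardinal.mk_le_of_injective hinj
          _ ≤ max (Cardinal.mk ↥(stage ℱ S0 p.1)) ℵ₀ ^ ℵ₀ :=
              Cardinal.mk_bounded_subset_le _ _
          _ ≤ c ^ ℵ₀ := Cardinal.power_le_power_right (max_le hstp hale)
          _ = c := hpow
      calc Cardinal.mk ↥(⋃₀ G)
          ≤ Cardinal.mk ↥G * ⨆ s : ↥G, Cardinal.mk ↥s.1 := Cardinal.mk_sUnion_le G
        _ ≤ c * ℵ₀ := mul_le_mul' hGle
            (ciSup_le' fun s => Cardinal.mk_le_aleph0_iff.2 (hℱc s.1 s.2.1).to_subtype)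
        _ ≤ c * c := mul_le_mul_right hale c
        _ = c := Cardinal.mul_eq_self hale
    have hIio : Cardinal.mk ↥(Set.Iio o) ≤ c := by
      rw [Ordinal.mk_Iio_ordinal]
      refine le_trans (Cardinal.lift_le.mpr ?_) hom
      have := Ordinal.card_le_card ho
      rwa [Cardinal.card_ord] at this
    calc Cardinal.mk ↥(S0 ∪ ⋃ p : ↥(Set.Iio o), ⋃₀ {F | F ∈ ℱ ∧ (F ∩ stage ℱ S0 p.1).Infinite})
        ≤ Cardinal.mk ↥S0 +
          Cardinal.mk ↥(⋃ p : ↥(Set.Iio o), ⋃₀ {F | F ∈ ℱ ∧ (F ∩ stage ℱ S0 p.1).Infinite}) :=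
          Cardinal.mk_union_le _ _
      _ ≤ c + c := by
          refine add_le_add hS0 ?_
          calc Cardinal.mk ↥(⋃ p : ↥(Set.Iio o), ⋃₀ {F | F ∈ ℱ ∧ (F ∩ stage ℱ S0 p.1).Infinite})
              ≤ Cardinal.sum
                (fun p : ↥(Set.Iio o) =>
                  Cardinal.mk ↥(⋃₀ {F | F ∈ ℱ ∧ (F ∩ stage ℱ S0 p.1).Infinite})) :=
                Cardinal.mk_iUnion_le_sum_mk
            _ ≤ Cardinal.sum (fun _ : ↥(Set.Iio o) => c) := Cardinal.sum_le_sum _ _ hU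
            _ = Cardinal.mk ↥(Set.Iio o) * c := Cardinal.sum_const' _ c
            _ ≤ c * c := mul_le_mul_left hIio c
            _ = c := Cardinal.mul_eq_self hale
      _ = c := Cardinal.add_eq_self hale

/-- Let `λ` be ω-inaccessible, `ℱ` a maximal almost disjoint family of subsets of `λ` of
order type `ω`, and `H : [λ]^ω → λ` a map such that for every `F ∈ ℱ` and infinite
`a ⊆ F` the image `H[[a]^ω]` equals `F`, and `H S = 0` whenever `S ∈ [λ]^ω` is contained
in no member of `ℱ`. Then the family of all `H`-closed subsets of `λ` of cardinality
less than `λ` is good over `λ`. -/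
theorem stmt10 (lam : Cardinal.{0}) (hlam : ∀ mu < lam, mu ^ ℵ₀ < lam)
    (ℱ : Set (Set Ordinal))
    (hF : ∀ F ∈ ℱ, F ⊆ Set.Iio lam.ord ∧ HasOrderTypeOmega F)
    (hAD : ∀ F ∈ ℱ, ∀ F' ∈ ℱ, F ≠ F' → (F ∩ F').Finite)
    (hMAD : ∀ S : Set Ordinal, S ⊆ Set.Iio lam.ord → S.Infinite →
      ∃ F ∈ ℱ, (S ∩ F).Infinite)
    (H : Set Ordinal → Ordinal)
    (hHcod : ∀ S : Set Ordinal, S ⊆ Set.Iio lam.ord → S.Countable → S.Infinite →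
      H S ∈ Set.Iio lam.ord)
    (hH : ∀ F ∈ ℱ, ∀ a : Set Ordinal, a ⊆ F → a.Infinite →
      H '' {S : Set Ordinal | S ⊆ a ∧ S.Countable ∧ S.Infinite} = F)
    (hH0 : ∀ S : Set Ordinal, S ⊆ Set.Iio lam.ord → S.Countable → S.Infinite →
      (∀ F ∈ ℱ, ¬ S ⊆ F) → H S = 0) :
    IsGoodFamily lam
      {C : Set Ordinal | C ⊆ Set.Iio lam.ord ∧ HClosed H C ∧
        Cardinal.mk ↥C < Cardinal.lift.{1} lam} := by
  classical
  -- `H` maps countably infinite subsets of a member of `ℱ` into that member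
  have hHmem : ∀ F ∈ ℱ, ∀ T : Set Ordinal, T ⊆ F → T.Countable → T.Infinite → H T ∈ F := by
    intro F hFm T h1 h2 h3
    have himg := hH F hFm T h1 h3
    rw [← himg]
    exact ⟨T, ⟨subset_rfl, h2, h3⟩, rfl⟩
  -- an `H`-closed set absorbs any `F ∈ ℱ` it meets infinitely
  have habs : ∀ A : Set Ordinal, HClosed H A → ∀ F ∈ ℱ, (F ∩ A).Infinite → F ⊆ A := by
    intro A hcl F hFm hinf x hx
    have himg := hH F hFm (F ∩ A) inter_subset_left hinf
    rw [← himg] at hx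
    obtain ⟨U, ⟨hU1, hU2, hU3⟩, hUx⟩ := hx
    have := hcl U (hU1.trans inter_subset_right) hU2 hU3
    rwa [hUx] at this
  refine ⟨?_, ?_, ?_, ?_⟩
  · -- (i) every member is a proper subset
    rintro A ⟨hA1, _, hA3⟩
    refine ssubset_iff_subset_ne.mpr ⟨hA1, fun he => ?_⟩
    rw [he, Ordinal.mk_Iio_ordinal, Cardinal.card_ord] at hA3
    exact lt_irrefl _ hA3
  · -- (ii) initial segments belong to the family
    intro α hα
    refine ⟨fun x hx => lt_trans hx hα, ?_, ?_⟩
    · intro Sx hsub hct hinf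
      have hsublam : Sx ⊆ Set.Iio lam.ord := fun x hx => lt_trans (hsub hx) hα
      by_cases hc : ∃ F ∈ ℱ, Sx ⊆ F
      · obtain ⟨F, hFm, hSF⟩ := hc
        have hHS : H Sx ∈ F := hHmem F hFm Sx hSF hct hinf
        have hFsub : F ⊆ Set.Iio α := by
          intro ξ hξ
          by_contra hcon
          have hfin := (hF F hFm).2.2.2 ξ hξ
          refine hinf (Set.Finite.subset hfin fun x hx => ?_)
          exact ⟨hSF hx, Set.mem_Iio.mpr (lt_of_lt_of_le (Set.mem_Iio.mp (hsub hx)) (not_lt.mp hcon))⟩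
        exact hFsub hHS
      · push_neg at hc
        rw [hH0 Sx hsublam hct hinf hc]
        obtain ⟨x, hx⟩ := hinf.nonempty
        exact lt_of_le_of_lt (zero_le (a := x)) (hsub hx)
    · rw [Ordinal.mk_Iio_ordinal]
      exact Cardinal.lift_lt.mpr (Cardinal.lt_ord.mp hα)
  · -- (iii) covering sets of size < λ
    intro S hSsub hScard
    by_cases hfin : lam < ℵ₀
    · -- degenerate case: λ finite, take `A := S`
      have hSfin : S.Finite := by
        refine Cardinal.lt_aleph0_iff_set_finite.mp (lt_of_lt_of_le hScard ?_)
        rw [← Cardinal.lift_aleph0.{1,0}]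
        exact Cardinal.lift_le.mpr (le_of_lt hfin)
      exact ⟨S, ⟨hSsub, fun U hU _ hUi => absurd hUi (hSfin.subset hU).not_infinite, hScard⟩,
        subset_rfl⟩
    · push_neg at hfin
      -- λ is infinite, hence `2 ^ ℵ₀ < λ`
      have h2lam : (2 : Cardinal.{0}) ^ ℵ₀ < lam :=
        hlam 2 (lt_of_lt_of_le (by exact_mod_cast Cardinal.nat_lt_aleph0 2) hfin)
      have hliftal : ℵ₀ ≤ Cardinal.lift.{1} lam := by
        rw [← Cardinal.lift_aleph0.{1,0}]
        exact Cardinal.lift_le.mpr hfin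
      have haleph1lt : Cardinal.lift.{1} (Cardinal.aleph (1 : Ordinal.{0})) < Cardinal.lift.{1} lam := by
        refine lt_of_le_of_lt (Cardinal.lift_le.mpr ?_) (Cardinal.lift_lt.mpr h2lam)
        rw [Cardinal.two_power_aleph0]
        exact Cardinal.aleph_one_le_continuum
      set ν : Cardinal.{1} := Cardinal.mk ↥S + Cardinal.lift.{1} (Cardinal.aleph (1 : Ordinal.{0})) with hν
      have hνlt : ν < Cardinal.lift.{1} lam :=
        Cardinal.add_lt_of_lt hliftal hScard haleph1lt
      have hνpos : ν ≠ 0 := by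
        intro h
        have : Cardinal.lift.{1} (Cardinal.aleph (1 : Ordinal.{0})) ≤ 0 := le_trans le_add_self (le_of_eq h)
        simp only [nonpos_iff_eq_zero, Cardinal.lift_eq_zero] at this
        exact (Cardinal.aleph_pos 1).ne' this
      set c : Cardinal.{1} := ν ^ ℵ₀ with hc
      have hνc : ν ≤ c := by
        conv_lhs => rw [← Cardinal.power_one ν]
        exact Cardinal.power_le_power_left hνpos Cardinal.one_le_aleph0
      have hpow : c ^ ℵ₀ = c := by
        rw [hc, ← Cardinal.power_mul, Cardinal.aleph0_mul_aleph0]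
      have hom : Cardinal.lift.{1} (Cardinal.aleph (1 : Ordinal.{0})) ≤ c := le_trans le_add_self hνc
      have hclt : c < Cardinal.lift.{1} lam := by
        obtain ⟨μ, hμ⟩ := Cardinal.mem_range_lift_of_le (le_of_lt hνlt)
        have hμlt : μ < lam := Cardinal.lift_lt.mp (hμ ▸ hνlt)
        have : Cardinal.lift.{1} (μ ^ ℵ₀) = c := by
          rw [Cardinal.lift_power, Cardinal.lift_aleph0, hμ]
        rw [← this]
        exact Cardinal.lift_lt.mpr (hlam μ hμlt)
      -- the closed set
      set S0 : Set Ordinal := insert 0 S with hS0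
      set om1 : Ordinal := (Cardinal.aleph (1 : Ordinal.{0})).ord with hom1
      set A : Set Ordinal := stage ℱ S0 om1 with hA
      have hzero : (0 : Ordinal) < lam.ord := by
        rw [Cardinal.lt_ord, Ordinal.card_zero]
        exact lt_of_lt_of_le Cardinal.aleph0_pos hfin
      have hS0sub : S0 ⊆ Set.Iio lam.ord := by
        intro x hx
        rcases hx with rfl | hx
        · exact hzero
        · exact hSsub hx
      have hAIio : A ⊆ Set.Iio lam.ord :=
        stage_subset ℱ hS0sub (fun F hFm => (hF F hFm).1) om1
      have hS0card : Cardinal.mk ↥S0 ≤ c := by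
        refine le_trans Cardinal.mk_insert_le (le_trans ?_ hνc)
        rw [hν]
        refine add_le_add_right ?_ _
        calc (1 : Cardinal.{1}) ≤ ℵ₀ := Cardinal.one_lt_aleph0.le
          _ = Cardinal.lift.{1} ℵ₀ := Cardinal.lift_aleph0.symm
          _ ≤ Cardinal.lift.{1} (Cardinal.aleph (1 : Ordinal.{0})) :=
              Cardinal.lift_le.mpr (aleph0_le_aleph 1)
      have hAcard : Cardinal.mk ↥A < Cardinal.lift.{1} lam := by
        refine lt_of_le_of_lt ?_ hclt
        exact stage_card ℱ S0 c (fun F hFm => (hF F hFm).2.1) hAD hS0card hom hpow om1 le_rfl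
      have hAclosed : HClosed H A := by
        intro T hTA hTc hTi
        -- every element of `A` appears at some countable stage
        have hrank : ∀ x ∈ A, ∃ o', o' < om1 ∧ x ∈ stage ℱ S0 o' := by
          intro x hx
          rcases mem_stage_elim ℱ S0 hx with h | ⟨o', ho', F, hFm, hFi, hxF⟩
          · refine ⟨0, ?_, subset_stage ℱ S0 0 h⟩
            rw [hom1, Cardinal.lt_ord, Ordinal.card_zero]
            exact Cardinal.aleph_pos 1
          · refine ⟨Order.succ o', ?_, F_subset_stage ℱ S0 hFm hFi (Order.lt_succ o') hxF⟩
            exact (Cardinal.isSuccLimit_ord (aleph0_le_aleph 1)).succ_lt ho'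
        obtain ⟨f, hfT⟩ := hTc.exists_eq_range hTi.nonempty
        have hr : ∀ n : ℕ, ∃ o', o' < om1 ∧ f n ∈ stage ℱ S0 o' := by
          intro n
          exact hrank (f n) (hTA (by rw [hfT]; exact mem_range_self n))
        choose g hg1 hg2 using hr
        have hsup : iSup g < om1 := by
          refine Ordinal.iSup_lt_ord ?_ hg1
          rw [hom1, Cardinal.isRegular_aleph_one.cof_eq, Cardinal.mk_denumerable]
          exact Cardinal.aleph0_lt_aleph_one
        have hTsub : T ⊆ stage ℱ S0 (iSup g) := by
          intro x hx
          rw [hfT] at hx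
          obtain ⟨n, rfl⟩ := hx
          exact stage_mono ℱ S0 (Ordinal.le_iSup g n) (hg2 n)
        by_cases hex : ∃ F ∈ ℱ, T ⊆ F
        · obtain ⟨F, hFm, hTF⟩ := hex
          have hFA : F ⊆ A := by
            refine F_subset_stage ℱ S0 hFm ?_ hsup
            exact hTi.mono (subset_inter hTF hTsub)
          exact hFA (hHmem F hFm T hTF hTc hTi)
        · push_neg at hex
          rw [hH0 T (hTA.trans hAIio) hTc hTi hex]
          exact subset_stage ℱ S0 om1 (mem_insert 0 S)
      exact ⟨A, ⟨hAIio, hAclosed, hAcard⟩,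
        (subset_insert 0 S).trans (subset_stage ℱ S0 om1)⟩
  · -- (iv) the ℵ₁-condition
    intro S hSsub hScard
    by_contra hcon
    push_neg at hcon
    -- from the negation, every admissible `T` has a "bad" closed set
    have key : ∀ T : {T : Set Ordinal // T ⊆ S ∧ Cardinal.mk ↥T = Cardinal.aleph 1},
        ∃ B : Set Ordinal, (B ⊆ Set.Iio lam.ord ∧ HClosed H B ∧
          Cardinal.mk ↥B < Cardinal.lift.{1} lam) ∧
          ℵ₀ < Cardinal.mk ↥(B ∩ T.1) ∧ ¬ T.1 ⊆ B := by
      rintro ⟨T, hT1, hT2⟩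
      obtain ⟨B, hB, h1, h2⟩ := hcon T hT1 hT2
      exact ⟨B, hB, h1, h2⟩
    choose B hBmem hBbig hBnsub using key
    -- iterate
    have hstep : ∀ T : {T : Set Ordinal // T ⊆ S ∧ Cardinal.mk ↥T = Cardinal.aleph 1},
        (B T ∩ T.1) ⊆ S ∧ Cardinal.mk ↥(B T ∩ T.1) = Cardinal.aleph 1 := by
      intro T
      refine ⟨inter_subset_right.trans T.2.1, ?_⟩
      refine le_antisymm (le_trans (Cardinal.mk_le_mk_of_subset inter_subset_right)
        (le_of_eq T.2.2)) ?_
      have h := hBbig T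
      exact (Cardinal.succ_aleph0.{1}).symm.trans_le (Order.succ_le_of_lt h)
    let next : {T : Set Ordinal // T ⊆ S ∧ Cardinal.mk ↥T = Cardinal.aleph 1} →
        {T : Set Ordinal // T ⊆ S ∧ Cardinal.mk ↥T = Cardinal.aleph 1} :=
      fun T => ⟨B T ∩ T.1, hstep T⟩
    let seq : ℕ → {T : Set Ordinal // T ⊆ S ∧ Cardinal.mk ↥T = Cardinal.aleph 1} :=
      fun n => Nat.rec ⟨S, subset_rfl, hScard⟩ (fun _ T => next T) n
    have hseq : ∀ n : ℕ, (seq (n + 1)).1 = B (seq n) ∩ (seq n).1 := fun n => rfl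
    -- the sequence is decreasing
    have hdec : ∀ n m : ℕ, n ≤ m → (seq m).1 ⊆ (seq n).1 := by
      intro n m h
      induction m with
      | zero => rw [Nat.le_zero.mp h]
      | succ m ih =>
        rcases Nat.lt_or_ge n (m + 1) with h' | h'
        · refine subset_trans ?_ (ih (Nat.lt_succ_iff.mp h'))
          rw [hseq m]; exact inter_subset_right
        · rw [Nat.le_antisymm h h']
    have hsubB : ∀ n : ℕ, (seq (n + 1)).1 ⊆ B (seq n) := by
      intro n; rw [hseq n]; exact inter_subset_left
    -- pick points witnessing non-inclusion
    have hpick : ∀ n : ℕ, ∃ x, x ∈ (seq n).1 ∧ x ∉ B (seq n) := by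
      intro n
      exact Set.not_subset.mp (hBnsub (seq n))
    choose s hs1 hs2 using hpick
    have hsinj : Function.Injective s := by
      intro a b hab
      by_contra hne
      rcases lt_or_gt_of_ne hne with h | h
      · exact hs2 a (hab ▸ hsubB a ((hdec (a + 1) b h) (hs1 b)))
      · exact hs2 b (hab ▸ hsubB b ((hdec (b + 1) a h) (hs1 a)))
    have hYsub : Set.range s ⊆ Set.Iio lam.ord := by
      rintro x ⟨n, rfl⟩
      exact hSsub ((seq n).2.1 (hs1 n))
    have hYinf : (Set.range s).Infinite := Set.infinite_range_of_injective hsinj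
    obtain ⟨F, hFm, hYF⟩ := hMAD (Set.range s) hYsub hYinf
    -- `F` is absorbed by every `B (seq n)`
    have hFB : ∀ n : ℕ, F ⊆ B (seq n) := by
      intro n
      refine habs (B (seq n)) (hBmem (seq n)).2.1 F hFm ?_
      have hbig : ((Set.range s ∩ F) \ (s '' {k | k ≤ n})).Infinite :=
        hYF.diff ((Set.finite_Iic n).image s)
      refine hbig.mono ?_
      rintro x ⟨⟨⟨m, rfl⟩, hxF⟩, hnot⟩
      have hmn : n < m := by
        by_contra hle
        exact hnot ⟨m, not_lt.mp hle, rfl⟩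
      exact ⟨hxF, hsubB n (hdec (n + 1) m hmn (hs1 m))⟩
    obtain ⟨y, ⟨⟨n, rfl⟩, hyF⟩⟩ := hYF.nonempty
    exact hs2 n (hFB n hyF)
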